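/- For a polynomial p of degree at most 1, ∫₀¹ p(z) φ₀((1-z)²λ) dz = ∑_{l=0}^∞ p(1/(2l+2)) (-1)^l λ^l / (2l+1)!, where φ₀(μ) = ∑_{l=0}^∞ (-1)^l μ^l/(2l)! and the series converges for every real λ. -/

import Mathlib

open MeasureTheory

theorem stmt_18 (p : Polynomial ℝ) (hp : p.degree ≤ 1) (lam : ℝ) :
    Summable (fun l : ℕ =>
      p.eval (1 / (2 * (l : ℝ) + 2)) * (-1 : ℝ) ^ l * lam ^ l
        / (Nat.factorial (2 * l + 1) : ℝ)) ∧
    (∫ z in (0:ℝ)..1, p.eval z *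
        (∑' l : ℕ, ((-1 : ℝ) ^ l * ((1 - z) ^ 2 * lam) ^ l / (Nat.factorial (2 * l) : ℝ))))
      = ∑' l : ℕ, p.eval (1 / (2 * (l : ℝ) + 2)) * (-1 : ℝ) ^ l * lam ^ l
          / (Nat.factorial (2 * l + 1) : ℝ) := by
  obtain ⟨a, b, hab⟩ : ∃ a b : ℝ, ∀ x, p.eval x = a + b * x := by
    refine ⟨p.coeff 0, p.coeff 1, fun x => ?_⟩
    have h2 : p.natDegree < 2 := by
      have h : p.natDegree ≤ 1 := Polynomial.natDegree_le_of_degree_le hp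
      omega
    rw [Polynomial.eval_eq_sum_range' h2]
    simp [Finset.sum_range_succ]
  set C : ℝ := |a| + |b| with hC
  have hpb : ∀ x : ℝ, |x| ≤ 1 → |p.eval x| ≤ C := by
    intro x hx
    rw [hab]
    calc |a + b * x| ≤ |a| + |b * x| := abs_add_le _ _
      _ ≤ |a| + |b| := by
          rw [abs_mul]
          nlinarith [abs_nonneg b, abs_nonneg x]
  have hmaj : Summable (fun l : ℕ => C * (|lam| ^ l / l.factorial)) :=
    (Real.summable_pow_div_factorial |lam|).mul_left C
  have hfacpos : ∀ n : ℕ, (0:ℝ) < n.factorial := fun n => by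
    exact_mod_cast Nat.factorial_pos n
  have hterm_bound : ∀ l : ℕ,
      ‖p.eval (1 / (2 * (l : ℝ) + 2)) * (-1 : ℝ) ^ l * lam ^ l
        / (Nat.factorial (2 * l + 1) : ℝ)‖ ≤ C * (|lam| ^ l / l.factorial) := by
    intro l
    have h1 : |(1:ℝ) / (2 * (l : ℝ) + 2)| ≤ 1 := by
      rw [abs_of_pos (by positivity), div_le_one (by positivity)]
      have hl : (0:ℝ) ≤ (l:ℝ) := Nat.cast_nonneg l
      linarith
    have h2 : (l.factorial : ℝ) ≤ ((2 * l + 1).factorial : ℝ) := by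
      exact_mod_cast Nat.factorial_le (by omega)
    rw [Real.norm_eq_abs, abs_div, abs_mul, abs_mul, abs_pow, abs_pow, abs_neg, abs_one,
      one_pow, mul_one, abs_of_pos (hfacpos _)]
    have hple := hpb _ h1
    calc |p.eval (1 / (2 * (l : ℝ) + 2))| * |lam| ^ l / ((2 * l + 1).factorial : ℝ)
        ≤ C * |lam| ^ l / ((2 * l + 1).factorial : ℝ) := by gcongr
      _ ≤ C * |lam| ^ l / (l.factorial : ℝ) := by
          have hC0 : (0:ℝ) ≤ C * |lam| ^ l := by
            have := hpb 0 (by norm_num); positivity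
          exact div_le_div_of_nonneg_left hC0 (hfacpos l) h2 |>.trans_eq rfl
      _ = C * (|lam| ^ l / l.factorial) := by ring
  have hsum : Summable (fun l : ℕ =>
      p.eval (1 / (2 * (l : ℝ) + 2)) * (-1 : ℝ) ^ l * lam ^ l
        / (Nat.factorial (2 * l + 1) : ℝ)) :=
    Summable.of_norm_bounded hmaj hterm_bound
  refine ⟨hsum, ?_⟩
  set f : ℕ → ℝ → ℝ := fun l z =>
    p.eval z * ((-1 : ℝ) ^ l * ((1 - z) ^ 2 * lam) ^ l / (Nat.factorial (2 * l) : ℝ)) with hf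
  have hcont : ∀ l : ℕ, Continuous (f l) := by
    intro l
    apply (p.continuous_aeval).mul
    apply Continuous.div_const
    fun_prop
  have hInteg : ∀ l : ℕ, IntegrableOn (f l) (Set.Ioc (0:ℝ) 1) :=
    fun l => (hcont l).integrableOn_Ioc
  have hptbd : ∀ l : ℕ, ∀ z ∈ Set.Ioc (0:ℝ) 1, ‖f l z‖ ≤ C * (|lam| ^ l / l.factorial) := by
    intro l z hz
    obtain ⟨hz0, hz1⟩ := hz
    have hz2 : |(1:ℝ) - z| ≤ 1 := by rw [abs_le]; constructor <;> linarith
    have hzz : ((1:ℝ) - z)^2 ≤ 1 := by nlinarith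
    have hzz0 : (0:ℝ) ≤ (1 - z)^2 := sq_nonneg _
    have h2 : (l.factorial : ℝ) ≤ ((2 * l).factorial : ℝ) := by
      exact_mod_cast Nat.factorial_le (by omega)
    rw [hf]
    simp only [Real.norm_eq_abs, abs_mul, abs_div, abs_pow, abs_neg, abs_one, one_pow, one_mul,
      abs_of_pos (hfacpos _)]
    have hz2sq : |1 - z| ^ 2 ≤ 1 := by nlinarith [abs_nonneg (1 - z)]
    have hb1 : (|1 - z| ^ 2 * |lam|) ^ l ≤ |lam| ^ l := by
      apply pow_le_pow_left₀ (by positivity)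
      nlinarith [abs_nonneg lam]
    have hpz : |p.eval z| ≤ C := hpb z (by rw [abs_le]; constructor <;> linarith)
    have hC0 : (0:ℝ) ≤ C := (abs_nonneg _).trans (hpb 0 (by norm_num))
    calc |p.eval z| * ((|1 - z| ^ 2 * |lam|) ^ l / ((2 * l).factorial : ℝ))
        ≤ C * (|lam| ^ l / ((2 * l).factorial : ℝ)) := by gcongr
      _ ≤ C * (|lam| ^ l / (l.factorial : ℝ)) := by gcongr
  have hnorm : Summable (fun l : ℕ => ∫ z in Set.Ioc (0:ℝ) 1, ‖f l z‖) := by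
    apply Summable.of_nonneg_of_le (fun l => integral_nonneg fun z => norm_nonneg _) _ hmaj
    intro l
    calc (∫ z in Set.Ioc (0:ℝ) 1, ‖f l z‖)
        ≤ ∫ _z in Set.Ioc (0:ℝ) 1, C * (|lam| ^ l / l.factorial) := by
          apply setIntegral_mono_on (hInteg l).norm (integrableOn_const (by simp))
            measurableSet_Ioc
          exact hptbd l
      _ = C * (|lam| ^ l / l.factorial) := by simp
  have interchange : (∫ z in (0:ℝ)..1, ∑' l : ℕ, f l z) = ∑' l : ℕ, ∫ z in (0:ℝ)..1, f l z := by
    rw [intervalIntegral.integral_of_le (by norm_num : (0:ℝ) ≤ 1)]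
    rw [← MeasureTheory.integral_tsum_of_summable_integral_norm hInteg hnorm]
    exact tsum_congr fun l => (intervalIntegral.integral_of_le (by norm_num)).symm
  have hIn : ∀ n : ℕ, (∫ z in (0:ℝ)..1, (1 - z) ^ n) = 1 / ((n:ℝ) + 1) := by
    intro n
    have h := intervalIntegral.integral_comp_sub_left (a := (0:ℝ)) (b := 1)
      (fun x => x ^ n) 1
    simp only [sub_self, sub_zero] at h
    rw [h, integral_pow]
    simp
  have key : ∀ l : ℕ, (∫ z in (0:ℝ)..1, f l z)
      = p.eval (1 / (2 * (l : ℝ) + 2)) * (-1 : ℝ) ^ l * lam ^ l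
          / (Nat.factorial (2 * l + 1) : ℝ) := by
    intro l
    have h1 : ∀ z : ℝ, f l z = ((-1 : ℝ) ^ l * lam ^ l / (Nat.factorial (2 * l) : ℝ))
        * ((a + b) * (1 - z) ^ (2 * l) - b * (1 - z) ^ (2 * l + 1)) := by
      intro z
      rw [hf]
      simp only [hab]
      rw [mul_pow, ← pow_mul]
      ring
    have hInt1 : IntervalIntegrable (fun z : ℝ => (a + b) * (1 - z) ^ (2 * l))
        volume 0 1 := (by fun_prop : Continuous _).intervalIntegrable 0 1
    have hInt2 : IntervalIntegrable (fun z : ℝ => b * (1 - z) ^ (2 * l + 1))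
        volume 0 1 := (by fun_prop : Continuous _).intervalIntegrable 0 1
    simp only [h1]
    rw [intervalIntegral.integral_const_mul, intervalIntegral.integral_sub hInt1 hInt2,
      intervalIntegral.integral_const_mul, intervalIntegral.integral_const_mul, hIn, hIn]
    have hfac : ((2 * l + 1).factorial : ℝ) = (2 * (l:ℝ) + 1) * ((2 * l).factorial : ℝ) := by
      rw [Nat.factorial_succ]
      push_cast
      ring
    rw [hab, hfac]
    have h2 : ((2 * l : ℕ) : ℝ) = 2 * (l:ℝ) := by push_cast; ring
    rw [h2]
    have hne1 : (2 * (l:ℝ) + 1) ≠ 0 := by positivity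
    have hne2 : (2 * (l:ℝ) + 1 + 1) ≠ 0 := by positivity
    have hne3 : ((2 * l).factorial : ℝ) ≠ 0 := ne_of_gt (hfacpos _)
    field_simp
    push_cast
    ring
  calc (∫ z in (0:ℝ)..1, p.eval z *
        (∑' l : ℕ, ((-1 : ℝ) ^ l * ((1 - z) ^ 2 * lam) ^ l / (Nat.factorial (2 * l) : ℝ))))
      = ∫ z in (0:ℝ)..1, ∑' l : ℕ, f l z := by
        apply intervalIntegral.integral_congr
        intro z _
        exact (tsum_mul_left).symm
    _ = ∑' l : ℕ, ∫ z in (0:ℝ)..1, f l z := interchange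
    _ = _ := tsum_congr key
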